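/- Let V, W ∈ Gr₂(n,k), let CS(V), CS(W), CS(V^⊥), CS(W^⊥) be fixed sets of coset representatives, and let z ∈ CS(V^⊥) and x' ∈ CS(W). Then ‖ (∑_{x ∈ CS(V)} |V_{x,z}⟩⟨V_{x,z}|) · (∑_{z' ∈ CS(W^⊥)} |W_{x',z'}⟩⟨W_{x',z'}|) ‖ ≤ √(2^{dim(V ∩ W) − k}), where ‖·‖ is the operator norm on (ℂ²)^{⊗n}. -/

import Mathlib

open scoped Classical

/-- The coset state `|W_{x,z}⟩ = 2^{-k/2} ∑_{u ∈ W} (-1)^{z·u} |x+u⟩` in `(ℂ²)^{⊗n}`,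
identified with `EuclideanSpace ℂ (Fin n → ZMod 2)` via the computational basis. -/
noncomputable def cosetState {n : ℕ} (W : Submodule (ZMod 2) (Fin n → ZMod 2))
    (x z : Fin n → ZMod 2) : EuclideanSpace ℂ (Fin n → ZMod 2) :=
  (((Real.sqrt 2 : ℝ) : ℂ) ^ (Module.finrank (ZMod 2) W))⁻¹ •
    ∑ u : W, ((-1 : ℂ) ^ (dotProduct z (u : Fin n → ZMod 2)).val) •
      EuclideanSpace.single (x + (u : Fin n → ZMod 2)) (1 : ℂ)

/-- The dual space `W^⊥ = {y ∈ 𝔽₂ⁿ : x·y = 0 for all x ∈ W}` with respect to the standard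
bilinear form `x·y = ∑ᵢ xᵢyᵢ`. -/
def dualSpace {n : ℕ} (W : Submodule (ZMod 2) (Fin n → ZMod 2)) :
    Submodule (ZMod 2) (Fin n → ZMod 2) where
  carrier := {y | ∀ x ∈ W, dotProduct x y = 0}
  add_mem' := by
    intro a b ha hb x hx
    simp [dotProduct_add, ha x hx, hb x hx]
  zero_mem' := by
    intro x hx
    simp
  smul_mem' := by
    intro c a ha x hx
    simp [dotProduct_smul, ha x hx]

/-- `T` is a set of coset representatives of the subspace `W` in `𝔽₂ⁿ`: it contains exactly
one vector from each coset of `W`. -/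
def IsCosetReps {n : ℕ} (W : Submodule (ZMod 2) (Fin n → ZMod 2))
    (T : Set (Fin n → ZMod 2)) : Prop :=
  ∀ v : Fin n → ZMod 2, ∃! x, x ∈ T ∧ v - x ∈ W

/-- The rank-one operator `|ψ⟩⟨φ|`. -/
noncomputable def outer {ι : Type*} [Fintype ι] [DecidableEq ι]
    (ψ φ : EuclideanSpace ℂ ι) : EuclideanSpace ℂ ι →L[ℂ] EuclideanSpace ℂ ι :=
  (innerSL ℂ φ).smulRight ψ

namespace S11

open ContinuousLinearMap


local notation "conj'" => starRingEnd ℂ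

lemma neg_one_pow_mod_two (m : ℕ) : ((-1:ℂ))^(m % 2) = (-1)^m := by
  conv_rhs => rw [← Nat.div_add_mod m 2]
  rw [pow_add, pow_mul]
  simp

lemma sgn_add (a b : ZMod 2) : ((-1:ℂ))^((a+b).val) = (-1)^a.val * (-1)^b.val := by
  rw [ZMod.val_add, neg_one_pow_mod_two, pow_add]

lemma conj_sgn (a : ZMod 2) : conj' ((-1:ℂ)^a.val) = (-1:ℂ)^a.val := by
  rw [map_pow]; norm_num

section outerLemmas

variable {ι : Type*} [Fintype ι] [DecidableEq ι]

lemma outer_apply (ψ φ ξ : EuclideanSpace ℂ ι) : outer ψ φ ξ = (inner ℂ φ ξ : ℂ) • ψ := rfl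

lemma outer_smul_left (a : ℂ) (ψ φ : EuclideanSpace ℂ ι) :
    outer (a • ψ) φ = a • outer ψ φ := by
  ext ξ
  simp only [outer_apply, ContinuousLinearMap.smul_apply]
  rw [smul_comm]

lemma outer_smul_right (a : ℂ) (ψ φ : EuclideanSpace ℂ ι) :
    outer ψ (a • φ) = (conj' a) • outer ψ φ := by
  ext ξ
  simp only [outer_apply, ContinuousLinearMap.smul_apply, inner_smul_left, smul_smul]

lemma outer_sum_left {κ : Type*} (s : Finset κ) (f : κ → EuclideanSpace ℂ ι)
    (φ : EuclideanSpace ℂ ι) : outer (∑ i ∈ s, f i) φ = ∑ i ∈ s, outer (f i) φ := by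
  ext ξ
  simp only [outer_apply, ContinuousLinearMap.sum_apply, Finset.smul_sum]

lemma outer_sum_right {κ : Type*} (s : Finset κ) (ψ : EuclideanSpace ℂ ι)
    (f : κ → EuclideanSpace ℂ ι) : outer ψ (∑ i ∈ s, f i) = ∑ i ∈ s, outer ψ (f i) := by
  ext ξ
  simp only [outer_apply, ContinuousLinearMap.sum_apply, sum_inner, Finset.sum_smul]

lemma outer_comp_outer (a b c d : EuclideanSpace ℂ ι) :
    (outer a b).comp (outer c d) = (inner ℂ b c : ℂ) • outer a d := by
  ext ξ
  simp only [ContinuousLinearMap.comp_apply, outer_apply, inner_smul_right, smul_smul,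
    ContinuousLinearMap.smul_apply]
  rw [mul_comm]

lemma adjoint_outer (a b : EuclideanSpace ℂ ι) :
    ContinuousLinearMap.adjoint (outer a b) = outer b a := by
  symm
  rw [ContinuousLinearMap.eq_adjoint_iff]
  intro x y
  simp only [outer_apply, inner_smul_left, inner_smul_right, inner_conj_symm]
  ring

lemma clm_ext_single {A B : EuclideanSpace ℂ ι →L[ℂ] EuclideanSpace ℂ ι}
    (h : ∀ j, A (EuclideanSpace.single j 1) = B (EuclideanSpace.single j 1)) : A = B := by
  apply ContinuousLinearMap.coe_injective
  apply Module.Basis.ext (PiLp.basisFun 2 ℂ ι)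
  intro j
  simpa [PiLp.basisFun_apply] using h j

end outerLemmas



section shift

variable {n : ℕ}

lemma add_self_F (a : Fin n → ZMod 2) : a + a = 0 := by
  funext i
  exact CharTwo.add_self_eq_zero (a i)

lemma sub_eq_add_F (a b : Fin n → ZMod 2) : a - b = a + b := by
  funext i
  exact CharTwo.sub_eq_add (a i) (b i)

noncomputable def shiftOp (v : Fin n → ZMod 2) :
    EuclideanSpace ℂ (Fin n → ZMod 2) →L[ℂ] EuclideanSpace ℂ (Fin n → ZMod 2) :=
  ((LinearIsometryEquiv.piLpCongrLeft 2 ℂ ℂ (Equiv.addRight v)).toLinearIsometry).toContinuousLinearMap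

lemma shiftOp_single (v j : Fin n → ZMod 2) (a : ℂ) :
    shiftOp v (EuclideanSpace.single j a) = EuclideanSpace.single (j + v) a := by
  have := LinearIsometryEquiv.piLpCongrLeft_single (p := 2) (𝕜 := ℂ) (E := ℂ)
    (Equiv.addRight v) j a
  simpa [shiftOp] using this

lemma norm_shiftOp_le (v : Fin n → ZMod 2) : ‖shiftOp v‖ ≤ 1 :=
  LinearIsometry.norm_toContinuousLinearMap_le _

lemma shiftOp_eq_sum (v : Fin n → ZMod 2) :
    shiftOp v = ∑ j : Fin n → ZMod 2,
      outer (EuclideanSpace.single (j + v) 1) (EuclideanSpace.single j 1) := by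
  apply clm_ext_single
  intro j
  rw [shiftOp_single, ContinuousLinearMap.sum_apply]
  rw [Finset.sum_eq_single j]
  · simp [outer_apply, EuclideanSpace.inner_single_left]
  · intro b _ hb
    simp [outer_apply, EuclideanSpace.inner_single_left, EuclideanSpace.single_apply,
      Ne.symm hb]
  · simp

end shift




variable {n : ℕ}

lemma reps_unique {S : Submodule (ZMod 2) (Fin n → ZMod 2)} {T : Set (Fin n → ZMod 2)}
    (hT : IsCosetReps S T) {x y : Fin n → ZMod 2} (hx : x ∈ T) (hy : y ∈ T)
    (hxy : x - y ∈ S) : x = y := by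
  obtain ⟨r, -, hu⟩ := hT x
  have h1 : x = r := hu x ⟨hx, by simp⟩
  have h2 : y = r := hu y ⟨hy, hxy⟩
  rw [h1, h2]

noncomputable def repEquiv {S : Submodule (ZMod 2) (Fin n → ZMod 2)}
    {T : Set (Fin n → ZMod 2)} (hT : IsCosetReps S T) :
    T × S ≃ (Fin n → ZMod 2) where
  toFun p := p.1.1 + p.2.1
  invFun j := ⟨⟨(hT j).choose, (hT j).choose_spec.1.1⟩,
    ⟨j - (hT j).choose, (hT j).choose_spec.1.2⟩⟩
  left_inv := by
    rintro ⟨⟨x, hx⟩, ⟨u, hu⟩⟩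
    have key : (hT (x + u)).choose = x :=
      ((hT (x + u)).choose_spec.2 x ⟨hx, by rwa [add_sub_cancel_left]⟩).symm
    refine Prod.ext (Subtype.ext ?_) (Subtype.ext ?_)
    · exact key
    · show x + u - _ = u
      rw [key, add_sub_cancel_left]
  right_inv := by
    intro j
    show (hT j).choose + (j - (hT j).choose) = j
    abel

lemma outer_coset_expand (V : Submodule (ZMod 2) (Fin n → ZMod 2)) (z x : Fin n → ZMod 2) :
    outer (cosetState V x z) (cosetState V x z)
      = ((2:ℂ) ^ Module.finrank (ZMod 2) V)⁻¹ •
        ∑ u : V, ∑ u' : V,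
          ((-1:ℂ) ^ (dotProduct z ((u : Fin n → ZMod 2) + (u' : Fin n → ZMod 2))).val) •
          outer (EuclideanSpace.single (x + (u : Fin n → ZMod 2)) 1)
            (EuclideanSpace.single (x + (u' : Fin n → ZMod 2)) 1) := by
  have h2 : ((Real.sqrt 2 : ℝ) : ℂ) * ((Real.sqrt 2 : ℝ) : ℂ) = 2 := by
    rw [← Complex.ofReal_mul, Real.mul_self_sqrt (by norm_num)]
    norm_num
  have hcc : (((Real.sqrt 2 : ℝ) : ℂ) ^ Module.finrank (ZMod 2) V)⁻¹ *
      conj' ((((Real.sqrt 2 : ℝ) : ℂ) ^ Module.finrank (ZMod 2) V)⁻¹)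
      = ((2:ℂ) ^ Module.finrank (ZMod 2) V)⁻¹ := by
    rw [map_inv₀, map_pow, Complex.conj_ofReal, ← mul_inv, ← mul_pow, h2]
  rw [cosetState, outer_smul_left, outer_smul_right, smul_smul, hcc]
  congr 1
  rw [outer_sum_left]
  apply Finset.sum_congr rfl
  intro u _
  rw [outer_smul_left, outer_sum_right, Finset.smul_sum]
  apply Finset.sum_congr rfl
  intro u' _
  rw [outer_smul_right, conj_sgn, smul_smul, dotProduct_add, sgn_add]



variable {n : ℕ}

lemma add_self_V {V : Submodule (ZMod 2) (Fin n → ZMod 2)} (b : V) : b + b = 0 :=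
  Subtype.ext (add_self_F (b : Fin n → ZMod 2))

def vEquiv (V : Submodule (ZMod 2) (Fin n → ZMod 2)) : V × V ≃ V × V where
  toFun p := (p.1 + p.2, p.2)
  invFun p := (p.1 + p.2, p.2)
  left_inv := by
    rintro ⟨a, b⟩
    simp [add_assoc, add_self_V]
  right_inv := by
    rintro ⟨a, b⟩
    simp [add_assoc, add_self_V]

lemma sum_outer_eq (V : Submodule (ZMod 2) (Fin n → ZMod 2)) (T : Set (Fin n → ZMod 2))
    (hT : IsCosetReps V T) (z : Fin n → ZMod 2) :
    (∑ x : T, outer (cosetState V (x : Fin n → ZMod 2) z) (cosetState V (x : Fin n → ZMod 2) z))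
      = ((2:ℂ) ^ Module.finrank (ZMod 2) V)⁻¹ •
        ∑ v : V, ((-1:ℂ) ^ (dotProduct z (v : Fin n → ZMod 2)).val) •
          shiftOp (v : Fin n → ZMod 2) := by
  simp only [outer_coset_expand, ← Finset.smul_sum]
  congr 1
  calc
    ∑ x : T, ∑ u : V, ∑ u' : V,
        ((-1:ℂ) ^ (dotProduct z ((u : Fin n → ZMod 2) + (u' : Fin n → ZMod 2))).val) •
        outer (EuclideanSpace.single ((x : Fin n → ZMod 2) + (u : Fin n → ZMod 2)) 1)
          (EuclideanSpace.single ((x : Fin n → ZMod 2) + (u' : Fin n → ZMod 2)) 1)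
      = ∑ x : T, ∑ p : V × V,
        ((-1:ℂ) ^ (dotProduct z ((p.1 : Fin n → ZMod 2) + (p.2 : Fin n → ZMod 2))).val) •
        outer (EuclideanSpace.single ((x : Fin n → ZMod 2) + (p.1 : Fin n → ZMod 2)) 1)
          (EuclideanSpace.single ((x : Fin n → ZMod 2) + (p.2 : Fin n → ZMod 2)) 1) := by
        refine Finset.sum_congr rfl fun x _ => ?_
        rw [Fintype.sum_prod_type]
    _ = ∑ x : T, ∑ p : V × V,
        ((-1:ℂ) ^ (dotProduct z (p.1 : Fin n → ZMod 2)).val) •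
        outer (EuclideanSpace.single ((x : Fin n → ZMod 2) + (p.2 : Fin n → ZMod 2) + (p.1 : Fin n → ZMod 2)) 1)
          (EuclideanSpace.single ((x : Fin n → ZMod 2) + (p.2 : Fin n → ZMod 2)) 1) := by
        refine Finset.sum_congr rfl fun x _ => ?_
        refine (Fintype.sum_equiv (vEquiv V) _ _ fun p => ?_).symm
        rcases p with ⟨v, u'⟩
        have h1 : ((v + u' : V) : Fin n → ZMod 2) + (u' : Fin n → ZMod 2) = (v : Fin n → ZMod 2) := by
          push_cast
          rw [add_assoc, add_self_F, add_zero]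
        have h2 : (x : Fin n → ZMod 2) + ((v + u' : V) : Fin n → ZMod 2)
            = (x : Fin n → ZMod 2) + (u' : Fin n → ZMod 2) + (v : Fin n → ZMod 2) := by
          push_cast
          abel
        simp only [vEquiv, Equiv.coe_fn_mk, h1, h2]
    _ = ∑ p : V × V, ∑ x : T,
        ((-1:ℂ) ^ (dotProduct z (p.1 : Fin n → ZMod 2)).val) •
        outer (EuclideanSpace.single ((x : Fin n → ZMod 2) + (p.2 : Fin n → ZMod 2) + (p.1 : Fin n → ZMod 2)) 1)
          (EuclideanSpace.single ((x : Fin n → ZMod 2) + (p.2 : Fin n → ZMod 2)) 1) :=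
        Finset.sum_comm
    _ = ∑ v : V, ((-1:ℂ) ^ (dotProduct z (v : Fin n → ZMod 2)).val) •
          shiftOp (v : Fin n → ZMod 2) := by
        rw [Fintype.sum_prod_type]
        refine Finset.sum_congr rfl fun v _ => ?_
        rw [shiftOp_eq_sum]
        simp only [← Finset.smul_sum]
        congr 1
        rw [Finset.sum_comm, ← Fintype.sum_prod_type']
        refine Fintype.sum_equiv (repEquiv hT) _ _ fun q => ?_
        rcases q with ⟨x, u'⟩
        rfl
  done



variable {n : ℕ}

lemma shiftOp_mul (v w : Fin n → ZMod 2) :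
    shiftOp v * shiftOp w = shiftOp (v + w) := by
  apply clm_ext_single
  intro j
  rw [ContinuousLinearMap.mul_apply, shiftOp_single, shiftOp_single, shiftOp_single]
  congr 1
  abel

lemma card_V (V : Submodule (ZMod 2) (Fin n → ZMod 2)) :
    Fintype.card V = 2 ^ Module.finrank (ZMod 2) V := by
  have := Module.card_eq_pow_finrank (K := ZMod 2) (V := V)
  rwa [ZMod.card] at this

lemma decomp_idem (V : Submodule (ZMod 2) (Fin n → ZMod 2)) (z : Fin n → ZMod 2) :
    (((2:ℂ) ^ Module.finrank (ZMod 2) V)⁻¹ •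
        ∑ v : V, ((-1:ℂ) ^ (dotProduct z (v : Fin n → ZMod 2)).val) •
          shiftOp (v : Fin n → ZMod 2)) *
      (((2:ℂ) ^ Module.finrank (ZMod 2) V)⁻¹ •
        ∑ v : V, ((-1:ℂ) ^ (dotProduct z (v : Fin n → ZMod 2)).val) •
          shiftOp (v : Fin n → ZMod 2))
    = ((2:ℂ) ^ Module.finrank (ZMod 2) V)⁻¹ •
        ∑ v : V, ((-1:ℂ) ^ (dotProduct z (v : Fin n → ZMod 2)).val) •
          shiftOp (v : Fin n → ZMod 2) := by
  rw [smul_mul_assoc, mul_smul_comm, smul_smul]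
  rw [Finset.sum_mul]
  have key : ∀ v : V, (((-1:ℂ) ^ (dotProduct z (v : Fin n → ZMod 2)).val) •
      shiftOp (v : Fin n → ZMod 2)) *
      (∑ w : V, ((-1:ℂ) ^ (dotProduct z (w : Fin n → ZMod 2)).val) •
        shiftOp (w : Fin n → ZMod 2))
      = ∑ w : V, ((-1:ℂ) ^ (dotProduct z ((v + w : V) : Fin n → ZMod 2)).val) •
          shiftOp ((v + w : V) : Fin n → ZMod 2) := by
    intro v
    rw [Finset.mul_sum]
    refine Finset.sum_congr rfl fun w _ => ?_
    rw [smul_mul_assoc, mul_smul_comm, smul_smul, shiftOp_mul]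
    congr 1
    rw [show ((v + w : V) : Fin n → ZMod 2) = (v : Fin n → ZMod 2) + (w : Fin n → ZMod 2) from rfl,
      dotProduct_add, sgn_add]
  simp only [key]
  have reparam : ∑ v : V, ∑ w : V,
      ((-1:ℂ) ^ (dotProduct z ((v + w : V) : Fin n → ZMod 2)).val) •
        shiftOp ((v + w : V) : Fin n → ZMod 2)
      = ∑ v : V, ∑ w : V,
      ((-1:ℂ) ^ (dotProduct z (v : Fin n → ZMod 2)).val) •
        shiftOp (v : Fin n → ZMod 2) := by
    rw [← Fintype.sum_prod_type', ← Fintype.sum_prod_type']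
    refine (Fintype.sum_equiv (vEquiv V) _ _ fun p => ?_).symm
    rcases p with ⟨a, b⟩
    simp only [vEquiv, Equiv.coe_fn_mk]
    congr 2 <;>
    · push_cast
      rw [add_assoc, add_self_F, add_zero]
  rw [reparam]
  simp only [Finset.sum_const, Finset.card_univ, card_V, ← Nat.cast_smul_eq_nsmul ℂ,
    ← Finset.smul_sum]
  rw [smul_smul]
  congr 1
  push_cast
  have h2K : ((2:ℂ) ^ Module.finrank (ZMod 2) V) ≠ 0 := pow_ne_zero _ two_ne_zero
  field_simp



local notation "conjC" => starRingEnd ℂ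

variable {n : ℕ}

lemma char_sum_zero (W : Submodule (ZMod 2) (Fin n → ZMod 2)) (c : Fin n → ZMod 2)
    (u0 : Fin n → ZMod 2) (hu0 : u0 ∈ W) (hdot : dotProduct c u0 = 1) :
    ∑ u : W, ((-1:ℂ) ^ (dotProduct c (u : Fin n → ZMod 2)).val) = 0 := by
  have h1 : ∑ u : W, ((-1:ℂ) ^ (dotProduct c (u : Fin n → ZMod 2)).val)
      = ∑ u : W,
        ((-1:ℂ) ^ (dotProduct c ((u + ⟨u0, hu0⟩ : W) : Fin n → ZMod 2)).val) :=
    (Fintype.sum_equiv (Equiv.addRight (⟨u0, hu0⟩ : W)) _ _ (fun u => rfl)).symm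
  have h2 : ∀ u : W,
      ((-1:ℂ) ^ (dotProduct c ((u + ⟨u0, hu0⟩ : W) : Fin n → ZMod 2)).val)
        = -((-1:ℂ) ^ (dotProduct c (u : Fin n → ZMod 2)).val) := by
    intro u
    rw [show ((u + ⟨u0, hu0⟩ : W) : Fin n → ZMod 2)
          = (u : Fin n → ZMod 2) + u0 from rfl,
      dotProduct_add, sgn_add, hdot]
    simp [ZMod.val_one]
  have h3 : ∑ u : W,
      ((-1:ℂ) ^ (dotProduct c ((u + ⟨u0, hu0⟩ : W) : Fin n → ZMod 2)).val)
      = -∑ u : W, ((-1:ℂ) ^ (dotProduct c (u : Fin n → ZMod 2)).val) := by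
    rw [← Finset.sum_neg_distrib]
    exact Finset.sum_congr rfl fun u _ => h2 u
  have h4 : (2:ℂ) * ∑ u : W, ((-1:ℂ) ^ (dotProduct c (u : Fin n → ZMod 2)).val) = 0 := by
    linear_combination h1.trans h3
  exact (mul_eq_zero.mp h4).resolve_left two_ne_zero

lemma inner_coset_orthonormal (W : Submodule (ZMod 2) (Fin n → ZMod 2))
    {TWp : Set (Fin n → ZMod 2)} (hTWp : IsCosetReps (dualSpace W) TWp)
    (x' : Fin n → ZMod 2) {z' z'' : Fin n → ZMod 2} (hz' : z' ∈ TWp) (hz'' : z'' ∈ TWp) :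
    (inner ℂ (cosetState W x' z') (cosetState W x' z'') : ℂ) = if z' = z'' then 1 else 0 := by
  have h2 : ((Real.sqrt 2 : ℝ) : ℂ) * ((Real.sqrt 2 : ℝ) : ℂ) = 2 := by
    rw [← Complex.ofReal_mul, Real.mul_self_sqrt (by norm_num)]
    norm_num
  rw [cosetState, cosetState, inner_smul_left, inner_smul_right, map_inv₀, map_pow,
    Complex.conj_ofReal]
  rw [sum_inner]
  simp only [inner_sum, inner_smul_left, inner_smul_right, conj_sgn,
    EuclideanSpace.inner_single_left, EuclideanSpace.single_apply, map_one, one_mul,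
    mul_ite, mul_one, mul_zero]
  have collapse : ∀ u : W, (∑ u' : W,
      if x' + (u : Fin n → ZMod 2) = x' + (u' : Fin n → ZMod 2) then
        ((-1:ℂ) ^ (dotProduct z'' (u' : Fin n → ZMod 2)).val) *
          ((-1:ℂ) ^ (dotProduct z' (u : Fin n → ZMod 2)).val) else 0)
      = ((-1:ℂ) ^ (dotProduct z' (u : Fin n → ZMod 2)).val) *
          ((-1:ℂ) ^ (dotProduct z'' (u : Fin n → ZMod 2)).val) := by
    intro u
    rw [Finset.sum_eq_single u]
    · rw [if_pos rfl, mul_comm]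
    · intro b _ hb
      rw [if_neg]
      simp only [add_right_inj]
      exact fun h => hb (Subtype.ext h.symm)
    · simp
  simp only [collapse]
  have hsum : ∀ u : W, ((-1:ℂ) ^ (dotProduct z' (u : Fin n → ZMod 2)).val) *
      ((-1:ℂ) ^ (dotProduct z'' (u : Fin n → ZMod 2)).val)
      = ((-1:ℂ) ^ (dotProduct (z' + z'') (u : Fin n → ZMod 2)).val) := by
    intro u
    rw [add_dotProduct, sgn_add]
  simp only [hsum]
  by_cases h : z' = z''
  · subst h
    rw [if_pos rfl]
    have hz0 : z' + z' = 0 := add_self_F z'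
    simp only [hz0, zero_dotProduct, ZMod.val_zero, pow_zero]
    rw [Finset.sum_const, Finset.card_univ, card_V, nsmul_eq_mul, mul_one]
    rw [← mul_assoc, ← mul_inv, ← mul_pow, h2]
    push_cast
    rw [inv_mul_cancel₀ (pow_ne_zero _ two_ne_zero)]
  · rw [if_neg h]
    have hne : z' - z'' ∉ dualSpace W := fun hmem => h (reps_unique hTWp hz' hz'' hmem)
    have hex : ∃ u0 ∈ W, dotProduct (z' + z'') u0 = 1 := by
      by_contra hcon
      push_neg at hcon
      apply hne
      intro x hx
      have hx0 := hcon x hx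
      have hzmod : ∀ a : ZMod 2, a ≠ 1 → a = 0 := by decide
      rw [sub_eq_add_F, dotProduct_comm]
      exact hzmod _ hx0
    obtain ⟨u0, hu0, hdot⟩ := hex
    rw [char_sum_zero W (z' + z'') u0 hu0 hdot, mul_zero, mul_zero]



variable {n : ℕ}

lemma inner_coset_single (W : Submodule (ZMod 2) (Fin n → ZMod 2)) (x' z' y : Fin n → ZMod 2)
    (hy : y - x' ∉ W) :
    (inner ℂ (cosetState W x' z') (EuclideanSpace.single y (1:ℂ)) : ℂ) = 0 := by
  rw [cosetState, inner_smul_left, sum_inner]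
  rw [Finset.sum_eq_zero, mul_zero]
  intro u _
  rw [inner_smul_left, EuclideanSpace.inner_single_left, EuclideanSpace.single_apply]
  rw [if_neg, mul_zero, mul_zero]
  intro hc
  apply hy
  rw [← hc, add_sub_cancel_left]
  exact u.2

lemma Q_single_eq_zero (W : Submodule (ZMod 2) (Fin n → ZMod 2))
    (TWp : Set (Fin n → ZMod 2)) (x' y : Fin n → ZMod 2) (hy : y - x' ∉ W) :
    (∑ z' : TWp, outer (cosetState W x' (z' : Fin n → ZMod 2))
        (cosetState W x' (z' : Fin n → ZMod 2))) (EuclideanSpace.single y (1:ℂ)) = 0 := by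
  rw [ContinuousLinearMap.sum_apply]
  apply Finset.sum_eq_zero
  intro z' _
  rw [outer_apply, inner_coset_single W x' _ y hy, zero_smul]

lemma outer_mul_outer {ι : Type*} [Fintype ι] [DecidableEq ι] (a b c d : EuclideanSpace ℂ ι) :
    outer a b * outer c d = (inner ℂ b c : ℂ) • outer a d := outer_comp_outer a b c d

lemma Q_mul_Q (W : Submodule (ZMod 2) (Fin n → ZMod 2))
    {TWp : Set (Fin n → ZMod 2)} (hTWp : IsCosetReps (dualSpace W) TWp)
    (x' : Fin n → ZMod 2) :
    (∑ z' : TWp, outer (cosetState W x' (z' : Fin n → ZMod 2))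
        (cosetState W x' (z' : Fin n → ZMod 2))) *
      (∑ z' : TWp, outer (cosetState W x' (z' : Fin n → ZMod 2))
        (cosetState W x' (z' : Fin n → ZMod 2)))
      = ∑ z' : TWp, outer (cosetState W x' (z' : Fin n → ZMod 2))
          (cosetState W x' (z' : Fin n → ZMod 2)) := by
  rw [Finset.sum_mul]
  refine Finset.sum_congr rfl fun z' _ => ?_
  rw [Finset.mul_sum, Finset.sum_eq_single z']
  · rw [outer_mul_outer, inner_coset_orthonormal W hTWp x' z'.2 z'.2, if_pos rfl, one_smul]
  · intro b _ hb
    rw [outer_mul_outer, inner_coset_orthonormal W hTWp x' z'.2 b.2,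
      if_neg (fun h => hb (Subtype.ext h.symm))]
    exact zero_smul ℂ (outer (cosetState W x' (z' : Fin n → ZMod 2))
      (cosetState W x' (b : Fin n → ZMod 2)))
  · simp

lemma adjoint_sum_outer {ι : Type*} [Fintype ι] [DecidableEq ι] {κ : Type*} (s : Finset κ)
    (f : κ → EuclideanSpace ℂ ι) :
    ContinuousLinearMap.adjoint (∑ i ∈ s, outer (f i) (f i)) = ∑ i ∈ s, outer (f i) (f i) := by
  rw [map_sum]
  exact Finset.sum_congr rfl fun i _ => adjoint_outer _ _

lemma norm_Q_le_one (W : Submodule (ZMod 2) (Fin n → ZMod 2))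
    {TWp : Set (Fin n → ZMod 2)} (hTWp : IsCosetReps (dualSpace W) TWp)
    (x' : Fin n → ZMod 2) :
    ‖∑ z' : TWp, outer (cosetState W x' (z' : Fin n → ZMod 2))
        (cosetState W x' (z' : Fin n → ZMod 2))‖ ≤ 1 := by
  set Q := ∑ z' : TWp, outer (cosetState W x' (z' : Fin n → ZMod 2))
      (cosetState W x' (z' : Fin n → ZMod 2)) with hQ
  have hadj : ContinuousLinearMap.adjoint Q = Q := by
    rw [hQ]; exact adjoint_sum_outer _ _
  have hQQ : Q * Q = Q := by rw [hQ]; exact Q_mul_Q W hTWp x'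
  have h1 : ‖Q‖ * ‖Q‖ = ‖Q‖ := by
    rw [← ContinuousLinearMap.norm_adjoint_comp_self Q, hadj,
      show Q ∘L Q = Q * Q from rfl, hQQ]
  nlinarith [norm_nonneg Q]

lemma Q_shift_Q_eq_zero (W : Submodule (ZMod 2) (Fin n → ZMod 2))
    (TWp : Set (Fin n → ZMod 2)) (x' v : Fin n → ZMod 2) (hv : v ∉ W) :
    (∑ z' : TWp, outer (cosetState W x' (z' : Fin n → ZMod 2))
        (cosetState W x' (z' : Fin n → ZMod 2))) * shiftOp v *
      (∑ z' : TWp, outer (cosetState W x' (z' : Fin n → ZMod 2))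
        (cosetState W x' (z' : Fin n → ZMod 2))) = 0 := by
  set Q := ∑ z' : TWp, outer (cosetState W x' (z' : Fin n → ZMod 2))
      (cosetState W x' (z' : Fin n → ZMod 2)) with hQ
  have key : ∀ z' : Fin n → ZMod 2, Q (shiftOp v (cosetState W x' z')) = 0 := by
    intro z'
    rw [cosetState, map_smul, map_sum, map_smul, map_sum]
    rw [Finset.sum_eq_zero, smul_zero]
    intro u _
    rw [map_smul, shiftOp_single, map_smul]
    rw [Q_single_eq_zero W TWp x' _ ?_, smul_zero]
    intro hc
    apply hv
    have h1 : x' + (u : Fin n → ZMod 2) + v - x' = (u : Fin n → ZMod 2) + v := by abel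
    rw [h1] at hc
    have := W.add_mem hc u.2
    rwa [add_comm, ← add_assoc, add_self_F, zero_add] at this
  apply clm_ext_single
  intro j
  rw [ContinuousLinearMap.mul_apply, ContinuousLinearMap.mul_apply,
    ContinuousLinearMap.zero_apply]
  have hQEj : Q (EuclideanSpace.single j 1)
      = ∑ z' : TWp, (inner ℂ (cosetState W x' (z' : Fin n → ZMod 2))
          (EuclideanSpace.single j 1) : ℂ) • cosetState W x' (z' : Fin n → ZMod 2) := by
    rw [hQ, ContinuousLinearMap.sum_apply]
    rfl
  rw [hQEj, map_sum, map_sum]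
  apply Finset.sum_eq_zero
  intro z' _
  rw [map_smul, map_smul, key, smul_zero]



lemma sandwich {ι : Type*} [Fintype ι] [DecidableEq ι] {κ : Type*} [Fintype κ]
    (A : EuclideanSpace ℂ ι →L[ℂ] EuclideanSpace ℂ ι) (e : ℂ) (c : κ → ℂ)
    (S : κ → (EuclideanSpace ℂ ι →L[ℂ] EuclideanSpace ℂ ι)) :
    A * (e • ∑ v : κ, c v • S v) * A = e • ∑ v : κ, c v • (A * S v * A) := by
  rw [mul_smul_comm, smul_mul_assoc, Finset.mul_sum, Finset.sum_mul]
  congr 1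
  exact Finset.sum_congr rfl fun v _ => by rw [mul_smul_comm, smul_mul_assoc]


end S11

set_option maxHeartbeats 1000000 in
/-- For `V, W ∈ Gr₂(n,k)`, coset representative sets
`CS(V), CS(W), CS(V^⊥), CS(W^⊥)`, and `z ∈ CS(V^⊥)`, `x' ∈ CS(W)`, the operator norm of
`(∑_{x ∈ CS(V)} |V_{x,z}⟩⟨V_{x,z}|)·(∑_{z' ∈ CS(W^⊥)} |W_{x',z'}⟩⟨W_{x',z'}|)`
is at most `√(2^{dim(V ∩ W) - k})`. -/
theorem norm_sum_outer_mul_sum_outer_le {n k : ℕ}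
    (V W : Submodule (ZMod 2) (Fin n → ZMod 2))
    (hV : Module.finrank (ZMod 2) V = k) (hW : Module.finrank (ZMod 2) W = k)
    (TV TW TVp TWp : Set (Fin n → ZMod 2))
    (hTV : IsCosetReps V TV) (hTW : IsCosetReps W TW)
    (hTVp : IsCosetReps (dualSpace V) TVp) (hTWp : IsCosetReps (dualSpace W) TWp)
    (z x' : Fin n → ZMod 2) (hz : z ∈ TVp) (hx' : x' ∈ TW) :
    ‖(∑ x : TV, outer (cosetState V (x : Fin n → ZMod 2) z)
          (cosetState V (x : Fin n → ZMod 2) z)) *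
        (∑ z' : TWp, outer (cosetState W x' (z' : Fin n → ZMod 2))
          (cosetState W x' (z' : Fin n → ZMod 2)))‖ ≤
      Real.sqrt ((2 : ℝ) ^ ((Module.finrank (ZMod 2) ↥(V ⊓ W) : ℤ) - (k : ℤ))) := by
  classical
  set d := Module.finrank (ZMod 2) ↥(V ⊓ W) with hd
  set P := ∑ x : TV, outer (cosetState V (x : Fin n → ZMod 2) z)
      (cosetState V (x : Fin n → ZMod 2) z) with hP
  set Q := ∑ z' : TWp, outer (cosetState W x' (z' : Fin n → ZMod 2))
      (cosetState W x' (z' : Fin n → ZMod 2)) with hQ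
  have hPdecomp : P = ((2:ℂ) ^ k)⁻¹ •
      ∑ v : V, ((-1:ℂ) ^ (dotProduct z (v : Fin n → ZMod 2)).val) •
        S11.shiftOp (v : Fin n → ZMod 2) := by
    rw [hP, S11.sum_outer_eq V TV hTV z, hV]
  have hPadj : ContinuousLinearMap.adjoint P = P := by
    rw [hP]; exact S11.adjoint_sum_outer _ _
  have hQadj : ContinuousLinearMap.adjoint Q = Q := by
    rw [hQ]; exact S11.adjoint_sum_outer _ _
  have hPP : P * P = P := by
    rw [hPdecomp, ← hV]; exact S11.decomp_idem V z
  have hQnorm : ‖Q‖ ≤ 1 := by rw [hQ]; exact S11.norm_Q_le_one W hTWp x'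
  have hterm : ∀ v : V, ‖Q * S11.shiftOp (v : Fin n → ZMod 2) * Q‖ ≤
      if (v : Fin n → ZMod 2) ∈ W then (1:ℝ) else 0 := by
    intro v
    by_cases hvW : (v : Fin n → ZMod 2) ∈ W
    · rw [if_pos hvW]
      have h1 := norm_mul_le (Q * S11.shiftOp (v : Fin n → ZMod 2)) Q
      have h2 := norm_mul_le Q (S11.shiftOp (v : Fin n → ZMod 2))
      have h3 := S11.norm_shiftOp_le (v : Fin n → ZMod 2)
      nlinarith [norm_nonneg Q, norm_nonneg (S11.shiftOp (v : Fin n → ZMod 2)),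
        norm_nonneg (Q * S11.shiftOp (v : Fin n → ZMod 2))]
    · rw [if_neg hvW]
      have h0 : Q * S11.shiftOp (v : Fin n → ZMod 2) * Q = 0 := by
        rw [hQ]; exact S11.Q_shift_Q_eq_zero W TWp x' _ hvW
      rw [h0, norm_zero]
  have hcount : ∑ v : V, (if (v : Fin n → ZMod 2) ∈ W then (1:ℝ) else 0) = (2:ℝ) ^ d := by
    rw [Finset.sum_boole]
    have hcc : (Finset.univ.filter fun v : V => (v : Fin n → ZMod 2) ∈ W).card
        = Fintype.card ↥(V ⊓ W) := by
      rw [← Fintype.card_subtype]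
      exact Fintype.card_congr
        ⟨fun p => ⟨p.1.1, Submodule.mem_inf.mpr ⟨p.1.2, p.2⟩⟩,
         fun q => ⟨⟨q.1, (Submodule.mem_inf.mp q.2).1⟩, (Submodule.mem_inf.mp q.2).2⟩,
         fun _ => rfl, fun _ => rfl⟩
    rw [hcc, S11.card_V (V ⊓ W), ← hd]
    push_cast
    rfl
  have hQPQeq : Q * P * Q = ((2:ℂ) ^ k)⁻¹ •
      ∑ v : V, ((-1:ℂ) ^ (dotProduct z (v : Fin n → ZMod 2)).val) •
        (Q * S11.shiftOp (v : Fin n → ZMod 2) * Q) := by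
    rw [hPdecomp]
    exact S11.sandwich Q _ _ _
  have hQPQ : ‖Q * P * Q‖ ≤ ((2:ℝ) ^ k)⁻¹ * (2:ℝ) ^ d := by
    calc ‖Q * P * Q‖ ≤ ‖((2:ℂ) ^ k)⁻¹‖ *
        ‖∑ v : V, ((-1:ℂ) ^ (dotProduct z (v : Fin n → ZMod 2)).val) •
          (Q * S11.shiftOp (v : Fin n → ZMod 2) * Q)‖ := by
          rw [hQPQeq]
          exact ContinuousLinearMap.opNorm_smul_le _ _
      _ ≤ ‖((2:ℂ) ^ k)⁻¹‖ *
          ∑ v : V, ‖((-1:ℂ) ^ (dotProduct z (v : Fin n → ZMod 2)).val) •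
            (Q * S11.shiftOp (v : Fin n → ZMod 2) * Q)‖ :=
          mul_le_mul_of_nonneg_left (norm_sum_le _ _) (norm_nonneg _)
      _ ≤ ‖((2:ℂ) ^ k)⁻¹‖ * ∑ v : V, (if (v : Fin n → ZMod 2) ∈ W then (1:ℝ) else 0) := by
          refine mul_le_mul_of_nonneg_left ?_ (norm_nonneg _)
          refine Finset.sum_le_sum fun v _ => ?_
          refine le_trans (ContinuousLinearMap.opNorm_smul_le _ _) ?_
          rw [norm_pow, norm_neg, norm_one, one_pow, one_mul]
          exact hterm v
      _ = ((2:ℝ) ^ k)⁻¹ * (2:ℝ) ^ d := by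
          rw [hcount, norm_inv, norm_pow, RCLike.norm_two]
  have hfinal : ‖P * Q‖ * ‖P * Q‖ ≤ ((2:ℝ) ^ k)⁻¹ * (2:ℝ) ^ d := by
    have heq : ContinuousLinearMap.adjoint (P * Q) ∘L (P * Q) = Q * P * Q := by
      rw [show P * Q = P ∘L Q from rfl, ContinuousLinearMap.adjoint_comp, hPadj, hQadj]
      show (Q * P) * (P * Q) = Q * P * Q
      rw [mul_assoc Q P (P * Q), ← mul_assoc P P Q, hPP, ← mul_assoc]
    calc ‖P * Q‖ * ‖P * Q‖
        = ‖ContinuousLinearMap.adjoint (P * Q) ∘L (P * Q)‖ :=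
          (ContinuousLinearMap.norm_adjoint_comp_self _).symm
      _ = ‖Q * P * Q‖ := by rw [heq]
      _ ≤ _ := hQPQ
  have hrpow : (2:ℝ) ^ ((d : ℤ) - (k : ℤ)) = ((2:ℝ) ^ k)⁻¹ * (2:ℝ) ^ d := by
    rw [zpow_sub₀ (two_ne_zero), zpow_natCast, zpow_natCast]
    rw [div_eq_mul_inv, mul_comm]
  rw [hrpow, Real.le_sqrt (norm_nonneg _) (by positivity)]
  rw [sq]
  exact hfinal
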